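/- Let ι be a finite index type, M : Matrix ι ι ℝ a symmetric positive definite matrix, r ≥ 0 and b real numbers, and C, Ĉ, x : ι → ℝ. Then the semi-infinite constraint "for every ξ : ι → ℝ with ξᵀ · M⁻¹ · ξ ≤ r², ∑_i (C i + Ĉ i * ξ i) * x i ≤ b" holds if and only if ∑_i C i * x i + r * √(∑_i ∑_{i'} M i i' * Ĉ i * Ĉ i' * x i * x i') ≤ b. -/

import Mathlib

open Matrix

/-- Symmetry of the bilinear form attached to a symmetric matrix. -/
lemma bilin_symm {ι : Type*} [Fintype ι] (N : Matrix ι ι ℝ) (hN : N.IsSymm)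
    (u v : ι → ℝ) : u ⬝ᵥ (N *ᵥ v) = v ⬝ᵥ (N *ᵥ u) := by
  simp only [dotProduct, mulVec, Finset.mul_sum]
  rw [Finset.sum_comm]
  refine Finset.sum_congr rfl fun i _ => Finset.sum_congr rfl fun j _ => ?_
  have h : N j i = N i j := by
    conv_lhs => rw [← hN]
    rfl
  rw [h]; ring

/-- Cauchy–Schwarz for the bilinear form of a positive semidefinite real matrix. -/
lemma bilin_cauchy_schwarz {ι : Type*} [Fintype ι] (N : Matrix ι ι ℝ)
    (hN : N.PosSemidef) (hNs : N.IsSymm) (u v : ι → ℝ) :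
    (u ⬝ᵥ (N *ᵥ v)) ^ 2 ≤ (u ⬝ᵥ (N *ᵥ u)) * (v ⬝ᵥ (N *ᵥ v)) := by
  have hq : ∀ t : ℝ,
      0 ≤ (v ⬝ᵥ (N *ᵥ v)) * (t * t) + (2 * (u ⬝ᵥ (N *ᵥ v))) * t + (u ⬝ᵥ (N *ᵥ u)) := by
    intro t
    have h0 := hN.dotProduct_mulVec_nonneg (u + t • v)
    simp only [star_trivial] at h0
    have hexp : (u + t • v) ⬝ᵥ (N *ᵥ (u + t • v)) =
        (v ⬝ᵥ (N *ᵥ v)) * (t * t) + (2 * (u ⬝ᵥ (N *ᵥ v))) * t + (u ⬝ᵥ (N *ᵥ u)) := by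
      rw [mulVec_add, mulVec_smul, dotProduct_add, add_dotProduct, add_dotProduct,
        dotProduct_smul, smul_dotProduct, smul_dotProduct, dotProduct_smul,
        bilin_symm N hNs v u]
      simp only [smul_eq_mul]
      ring
    linarith [hexp ▸ h0]
  have hd := discrim_le_zero hq
  simp only [discrim] at hd
  nlinarith [hd]

theorem correlated_ellipsoid_robust_upper_quality
    {ι : Type*} [Fintype ι] [DecidableEq ι] (M : Matrix ι ι ℝ)
    (hM : M.PosDef) (hMsymm : M.IsSymm)
    (r b : ℝ) (hr : 0 ≤ r) (C Chat x : ι → ℝ) :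
    (∀ ξ : ι → ℝ, ξ ⬝ᵥ (M⁻¹ *ᵥ ξ) ≤ r ^ 2 →
        ∑ i, (C i + Chat i * ξ i) * x i ≤ b) ↔
      ∑ i, C i * x i +
        r * Real.sqrt (∑ i, ∑ i', M i i' * Chat i * Chat i' * x i * x i') ≤ b := by
  classical
  set a : ι → ℝ := fun i => Chat i * x i with ha
  have hdetu : IsUnit M.det := isUnit_iff_ne_zero.mpr hM.det_pos.ne'
  have hinv1 : ∀ w : ι → ℝ, M⁻¹ *ᵥ (M *ᵥ w) = w := fun w => by
    rw [mulVec_mulVec, Matrix.nonsing_inv_mul M hdetu, one_mulVec]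
  have hinv2 : ∀ w : ι → ℝ, M *ᵥ (M⁻¹ *ᵥ w) = w := fun w => by
    rw [mulVec_mulVec, Matrix.mul_nonsing_inv M hdetu, one_mulVec]
  have hMinvSymm : (M⁻¹).IsSymm := by
    rw [Matrix.IsSymm, Matrix.transpose_nonsing_inv, hMsymm]
  have hsum : ∀ ξ : ι → ℝ,
      ∑ i, (C i + Chat i * ξ i) * x i = (∑ i, C i * x i) + a ⬝ᵥ ξ := by
    intro ξ
    rw [dotProduct, ← Finset.sum_add_distrib]
    exact Finset.sum_congr rfl fun i _ => by simp [ha]; ring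
  have hs : ∑ i, ∑ i', M i i' * Chat i * Chat i' * x i * x i' = a ⬝ᵥ (M *ᵥ a) := by
    simp only [dotProduct, mulVec, Finset.mul_sum]
    exact Finset.sum_congr rfl fun i _ => Finset.sum_congr rfl fun j _ => by
      simp [ha]; ring
  set s : ℝ := a ⬝ᵥ (M *ᵥ a) with hsdef
  have hs0 : 0 ≤ s := by simpa using hM.posSemidef.dotProduct_mulVec_nonneg a
  rw [hs]
  constructor
  · intro H
    rcases eq_or_lt_of_le hs0 with hseq | hspos
    · have h0 := H 0 (by simp [sq_nonneg r])
      rw [hsum 0] at h0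
      simp only [← hsdef, ← hseq, Real.sqrt_zero, mul_zero]
      simpa using h0
    · set ξ : ι → ℝ := (r / Real.sqrt s) • (M *ᵥ a) with hξ
      have hsqs : Real.sqrt s * Real.sqrt s = s := Real.mul_self_sqrt hs0
      have hsqpos : 0 < Real.sqrt s := Real.sqrt_pos.mpr hspos
      have hfeas : ξ ⬝ᵥ (M⁻¹ *ᵥ ξ) ≤ r ^ 2 := by
        rw [hξ, mulVec_smul, smul_dotProduct, dotProduct_smul, hinv1,
          dotProduct_comm, ← hsdef, smul_eq_mul, smul_eq_mul]
        have h1 : r / Real.sqrt s * (r / Real.sqrt s * s) =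
            r * r * (s / Real.sqrt s / Real.sqrt s) := by ring
        rw [h1, Real.div_sqrt, div_self hsqpos.ne', mul_one, ← pow_two]
      have hval : a ⬝ᵥ ξ = r * Real.sqrt s := by
        rw [hξ, dotProduct_smul, ← hsdef, smul_eq_mul]
        have h1 : r / Real.sqrt s * s = r * (s / Real.sqrt s) := by ring
        rw [h1, Real.div_sqrt]
      have h0 := H ξ hfeas
      rw [hsum ξ, hval] at h0
      exact h0
  · intro H ξ hξ
    rw [hsum ξ]
    have hkey : a ⬝ᵥ ξ = (M *ᵥ a) ⬝ᵥ (M⁻¹ *ᵥ ξ) := by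
      rw [dotProduct_comm (M *ᵥ a), bilin_symm M hMsymm, hinv2]
    have hnorm : (M *ᵥ a) ⬝ᵥ (M⁻¹ *ᵥ (M *ᵥ a)) = s := by
      rw [hinv1, dotProduct_comm, ← hsdef]
    have hcs := bilin_cauchy_schwarz (M⁻¹) hM.inv.posSemidef hMinvSymm (M *ᵥ a) ξ
    rw [hnorm, ← hkey] at hcs
    have hb : (a ⬝ᵥ ξ) ^ 2 ≤ s * r ^ 2 :=
      le_trans hcs (mul_le_mul_of_nonneg_left hξ hs0)
    have h1 : a ⬝ᵥ ξ ≤ r * Real.sqrt s := by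
      have h2 : a ⬝ᵥ ξ ≤ Real.sqrt ((a ⬝ᵥ ξ) ^ 2) := by
        rw [Real.sqrt_sq_eq_abs]; exact le_abs_self _
      calc a ⬝ᵥ ξ ≤ Real.sqrt ((a ⬝ᵥ ξ) ^ 2) := h2
        _ ≤ Real.sqrt (s * r ^ 2) := Real.sqrt_le_sqrt hb
        _ = r * Real.sqrt s := by
            rw [Real.sqrt_mul hs0, Real.sqrt_sq hr, mul_comm]
    linarith
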